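/- With the notation of the previous setup (v ∈ L¹ nonnegative, f(t) = ∫_0^t v, g(s) = inf{t : f(t) = s}), if g is discontinuous at s₀ ∈ (0,L), then f⁻¹(s₀) is a nondegenerate closed interval [t₀, t₁] and ∫_{t₀}^{t} v(τ) dτ = 0 for all t ∈ [t₀, t₁]; consequently any curve q with metric speed bounded by v is constant on [t₀, t₁], so q ∘ g is continuous at s₀. -/

import Mathlib

open Real Set MeasureTheory

/-- If g (the generalized inverse of f(t) = ∫₀ᵗ v) is discontinuous at s₀ ∈ (0,L),
then the level set f⁻¹(s₀) is a nondegenerate interval [t₀,t₁] on which v has zero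
integral; any curve with metric speed bounded by v is constant there, and q ∘ g is
continuous at s₀. -/
theorem stmt_9 {M : Type*} [MetricSpace M] (T L : ℝ) (hT : 0 ≤ T)
    (v : ℝ → ℝ) (hv : IntegrableOn v (Icc 0 T))
    (hvpos : ∀ t ∈ Icc 0 T, 0 ≤ v t)
    (f : ℝ → ℝ) (hf : ∀ t, f t = ∫ τ in (0:ℝ)..t, v τ)
    (hL : f T = L)
    (g : ℝ → ℝ) (hg : ∀ s, g s = sInf {t | t ∈ Icc 0 T ∧ f t = s})
    (q : ℝ → M)
    (hq : ∀ t₀ t₁, 0 ≤ t₀ → t₀ ≤ t₁ → t₁ ≤ T →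
      dist (q t₀) (q t₁) ≤ ∫ τ in t₀..t₁, v τ)
    (s₀ : ℝ) (hs₀ : s₀ ∈ Ioo 0 L)
    (hdisc : ¬ ContinuousAt g s₀) :
    (∃ t₀ t₁, t₀ < t₁ ∧ {t | t ∈ Icc 0 T ∧ f t = s₀} = Icc t₀ t₁ ∧
      (∀ t ∈ Icc t₀ t₁, (∫ τ in t₀..t, v τ) = 0) ∧
      (∀ t ∈ Icc t₀ t₁, q t = q t₀)) ∧
    ContinuousAt (fun s => q (g s)) s₀ := by
  obtain ⟨hs0pos, hs0L⟩ := hs₀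
  have hf0 : f 0 = 0 := by rw [hf]; simp
  -- interval integrability on subintervals
  have hii : ∀ a b : ℝ, 0 ≤ a → a ≤ b → b ≤ T → IntervalIntegrable v volume a b := by
    intro a b ha hab hbT
    rw [intervalIntegrable_iff_integrableOn_Ioc_of_le hab]
    exact hv.mono_set (fun x hx => ⟨le_trans ha (le_of_lt hx.1), le_trans hx.2 hbT⟩)
  have hadd : ∀ a b : ℝ, a ∈ Icc 0 T → b ∈ Icc 0 T → a ≤ b →
      f b = f a + ∫ τ in a..b, v τ := by
    intro a b ha hb hab
    rw [hf, hf]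
    exact (intervalIntegral.integral_add_adjacent_intervals
      (hii 0 a le_rfl ha.1 ha.2) (hii a b ha.1 hab hb.2)).symm
  have hmono : ∀ a b : ℝ, a ∈ Icc 0 T → b ∈ Icc 0 T → a ≤ b → f a ≤ f b := by
    intro a b ha hb hab
    have h0 : (0:ℝ) ≤ ∫ τ in a..b, v τ :=
      intervalIntegral.integral_nonneg hab
        (fun u hu => hvpos u ⟨le_trans ha.1 hu.1, le_trans hu.2 hb.2⟩)
    rw [hadd a b ha hb hab]; linarith
  have hcont : ContinuousOn f (Icc 0 T) := by
    have h := intervalIntegral.continuousOn_primitive_interval (a := (0:ℝ)) (b := T)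
      (μ := volume) (f := v) (by rwa [uIcc_of_le hT])
    rw [uIcc_of_le hT] at h
    exact h.congr (fun x _ => hf x)
  -- distance bound
  have hdist : ∀ a b : ℝ, a ∈ Icc 0 T → b ∈ Icc 0 T → dist (q a) (q b) ≤ |f b - f a| := by
    intro a b ha hb
    rcases le_total a b with hab | hab
    · calc dist (q a) (q b) ≤ ∫ τ in a..b, v τ := hq a b ha.1 hab hb.2
        _ = f b - f a := by rw [hadd a b ha hb hab]; ring
        _ ≤ |f b - f a| := le_abs_self _
    · calc dist (q a) (q b) = dist (q b) (q a) := dist_comm _ _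
        _ ≤ ∫ τ in b..a, v τ := hq b a hb.1 hab ha.2
        _ = f a - f b := by rw [hadd b a hb ha hab]; ring
        _ ≤ |f b - f a| := by rw [abs_sub_comm]; exact le_abs_self _
  -- level sets
  have hScl : ∀ s : ℝ, IsCompact {t | t ∈ Icc 0 T ∧ f t = s} := by
    intro s
    have hcl : IsClosed (Icc (0:ℝ) T ∩ f ⁻¹' {s}) :=
      hcont.preimage_isClosed_of_isClosed isClosed_Icc isClosed_singleton
    have heq : {t | t ∈ Icc 0 T ∧ f t = s} = Icc (0:ℝ) T ∩ f ⁻¹' {s} := by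
      ext t; simp [Set.mem_inter_iff, Set.mem_preimage]
    rw [heq]
    exact IsCompact.of_isClosed_subset isCompact_Icc hcl (Set.inter_subset_left)
  have hSne : ∀ s : ℝ, s ∈ Icc 0 L → {t | t ∈ Icc 0 T ∧ f t = s}.Nonempty := by
    intro s hs
    have : s ∈ Icc (f 0) (f T) := by rw [hf0, hL]; exact hs
    obtain ⟨t, ht, hft⟩ := intermediate_value_Icc hT hcont this
    exact ⟨t, ht, hft⟩
  have hgS : ∀ s : ℝ, s ∈ Icc 0 L → g s ∈ Icc 0 T ∧ f (g s) = s := by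
    intro s hs
    rw [hg]
    exact (hScl s).sInf_mem (hSne s hs)
  have hs0mem : s₀ ∈ Icc (0:ℝ) L := ⟨hs0pos.le, hs0L.le⟩
  set S : Set ℝ := {t | t ∈ Icc 0 T ∧ f t = s₀} with hSdef
  have hSne0 : S.Nonempty := hSne s₀ hs0mem
  have hScomp : IsCompact S := hScl s₀
  set t₀ : ℝ := sInf S with ht₀def
  set t₁ : ℝ := sSup S with ht₁def
  have ht₀S : t₀ ∈ S := hScomp.sInf_mem hSne0
  have ht₁S : t₁ ∈ S := hScomp.sSup_mem hSne0
  have hbdd : BddBelow S := hScomp.bddBelow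
  have hbdda : BddAbove S := hScomp.bddAbove
  have hSeq : S = Icc t₀ t₁ := by
    ext t
    constructor
    · intro ht
      exact ⟨csInf_le hbdd ht, le_csSup hbdda ht⟩
    · rintro ⟨h0, h1⟩
      have htIcc : t ∈ Icc 0 T := ⟨le_trans ht₀S.1.1 h0, le_trans h1 ht₁S.1.2⟩
      refine ⟨htIcc, le_antisymm ?_ ?_⟩
      · have := hmono t t₁ htIcc ht₁S.1 h1
        rw [ht₁S.2] at this; exact this
      · have := hmono t₀ t ht₀S.1 htIcc h0
        rw [ht₀S.2] at this; exact this
  have ht₀pos : 0 < t₀ := by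
    rcases lt_or_eq_of_le ht₀S.1.1 with h | h
    · exact h
    · exfalso
      have h2 := ht₀S.2
      rw [← h, hf0] at h2
      linarith
  have ht₁T : t₁ < T := by
    rcases lt_or_eq_of_le ht₁S.1.2 with h | h
    · exact h
    · exfalso
      have h2 := ht₁S.2
      rw [h, hL] at h2
      linarith
  have ht01le : t₀ ≤ t₁ := csInf_le_csSup hSne0 hbdd hbdda
  -- strict inequality via discontinuity
  have ht01 : t₀ < t₁ := by
    rcases lt_or_eq_of_le ht01le with h | heq
    · exact h
    exfalso
    apply hdisc
    rw [Metric.continuousAt_iff]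
    intro ε hε
    set ε' : ℝ := min (ε/2) (min (t₀/2) ((T - t₀)/2)) with hε'def
    have hε'pos : 0 < ε' := by
      apply lt_min (by linarith)
      apply lt_min (by linarith)
      have : t₀ < T := lt_of_le_of_lt (heq ▸ le_rfl) ht₁T
      linarith
    have ha_mem : t₀ - ε' ∈ Icc (0:ℝ) T := by
      constructor
      · have : ε' ≤ t₀/2 := le_trans (min_le_right _ _) (min_le_left _ _)
        linarith
      · linarith [ht₀S.1.2, hε'pos]
    have hb_mem : t₀ + ε' ∈ Icc (0:ℝ) T := by
      constructor
      · linarith [ht₀S.1.1, hε'pos]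
      · have : ε' ≤ (T - t₀)/2 := le_trans (min_le_right _ _) (min_le_right _ _)
        linarith
    have hfa : f (t₀ - ε') < s₀ := by
      rcases lt_or_eq_of_le (hmono _ _ ha_mem ht₀S.1 (by linarith)) with h | h
      · rw [ht₀S.2] at h; exact h
      · exfalso
        have : t₀ - ε' ∈ S := ⟨ha_mem, by rw [h, ht₀S.2]⟩
        have := csInf_le hbdd this
        linarith
    have hfb : s₀ < f (t₀ + ε') := by
      rcases lt_or_eq_of_le (hmono _ _ ht₀S.1 hb_mem (by linarith)) with h | h
      · rw [ht₀S.2] at h; exact h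
      · exfalso
        have : t₀ + ε' ∈ S := ⟨hb_mem, by rw [← h, ht₀S.2]⟩
        have h3 := le_csSup hbdda this
        rw [← ht₁def, ← heq] at h3
        linarith
    refine ⟨min (s₀ - f (t₀ - ε')) (f (t₀ + ε') - s₀),
      lt_min (by linarith) (by linarith), ?_⟩
    intro s hs
    rw [Real.dist_eq] at hs
    have hs1 : f (t₀ - ε') < s := by
      have := abs_lt.mp hs
      have h2 := min_le_left (s₀ - f (t₀ - ε')) (f (t₀ + ε') - s₀)
      linarith [this.1]
    have hs2 : s < f (t₀ + ε') := by
      have := abs_lt.mp hs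
      have h2 := min_le_right (s₀ - f (t₀ - ε')) (f (t₀ + ε') - s₀)
      linarith [this.2]
    -- the level set for s sits inside (t₀ - ε', t₀ + ε')
    have hconts : ContinuousOn f (Icc (t₀ - ε') (t₀ + ε')) :=
      hcont.mono (Icc_subset_Icc ha_mem.1 hb_mem.2)
    obtain ⟨t, htmem, hft⟩ := intermediate_value_Icc (by linarith : t₀ - ε' ≤ t₀ + ε')
      hconts ⟨hs1.le, hs2.le⟩
    have htIcc : t ∈ Icc (0:ℝ) T := ⟨le_trans ha_mem.1 htmem.1, le_trans htmem.2 hb_mem.2⟩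
    have htS : t ∈ {u | u ∈ Icc 0 T ∧ f u = s} := ⟨htIcc, hft⟩
    have hne : {u | u ∈ Icc (0:ℝ) T ∧ f u = s}.Nonempty := ⟨t, htS⟩
    have hbd : BddBelow {u | u ∈ Icc (0:ℝ) T ∧ f u = s} := (hScl s).bddBelow
    have hub : g s ≤ t₀ + ε' := by
      rw [hg]; exact le_trans (csInf_le hbd htS) htmem.2
    have hlb : t₀ - ε' ≤ g s := by
      rw [hg]
      apply le_csInf hne
      intro u hu
      by_contra hcon
      push_neg at hcon
      have : f u ≤ f (t₀ - ε') := hmono u _ hu.1 ha_mem hcon.le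
      rw [hu.2] at this
      linarith
    rw [Real.dist_eq]
    have hgs0 : g s₀ = t₀ := by rw [hg]
    rw [hgs0, abs_lt]
    have hε'ε : ε' ≤ ε/2 := min_le_left _ _
    refine ⟨by linarith, by linarith⟩
  -- conclusions
  have hzero : ∀ t ∈ Icc t₀ t₁, (∫ τ in t₀..t, v τ) = 0 := by
    intro t ht
    have htS : t ∈ S := hSeq ▸ ht
    have := hadd t₀ t ht₀S.1 htS.1 ht.1
    rw [ht₀S.2, htS.2] at this
    linarith
  have hqconst : ∀ t ∈ Icc t₀ t₁, q t = q t₀ := by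
    intro t ht
    have htS : t ∈ S := hSeq ▸ ht
    have h := hq t₀ t ht₀S.1.1 ht.1 htS.1.2
    rw [hzero t ht] at h
    exact (eq_of_dist_eq_zero (le_antisymm h dist_nonneg)).symm
  refine ⟨⟨t₀, t₁, ht01, hSeq, hzero, hqconst⟩, ?_⟩
  -- continuity of q ∘ g at s₀
  rw [Metric.continuousAt_iff]
  intro ε hε
  refine ⟨min ε (min s₀ (L - s₀)), lt_min hε (lt_min hs0pos (by linarith)), ?_⟩
  intro s hs
  rw [Real.dist_eq] at hs
  have habs := abs_lt.mp hs
  have hsm : s ∈ Icc (0:ℝ) L := by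
    constructor
    · have := min_le_right ε (min s₀ (L - s₀))
      have := min_le_left s₀ (L - s₀)
      nlinarith [habs.1, min_le_right ε (min s₀ (L - s₀)), min_le_left s₀ (L - s₀)]
    · nlinarith [habs.2, min_le_right ε (min s₀ (L - s₀)), min_le_right s₀ (L - s₀)]
  obtain ⟨hgsI, hfgs⟩ := hgS s hsm
  obtain ⟨hgs0I, hfgs0⟩ := hgS s₀ hs0mem
  calc dist (q (g s)) (q (g s₀)) ≤ |f (g s₀) - f (g s)| := hdist _ _ hgsI hgs0I
    _ = |s₀ - s| := by rw [hfgs, hfgs0]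
    _ = |s - s₀| := abs_sub_comm _ _
    _ < min ε (min s₀ (L - s₀)) := hs
    _ ≤ ε := min_le_left _ _
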